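/- Let k ∈ ℝ and let h : [0,1/2] → ℂ be twice continuously differentiable, not identically zero, satisfying h''(x) = −k² h(x) for all x ∈ (0,1/2), together with the boundary conditions h'(0) + h'(1/2) = 0 and h(0) + h(1/2) = (3/2) h'(0). Then 3k sin(k/2) = 4(1 + cos(k/2)). These are the eigenvalue equations for the selfadjoint operator T_F⁻¹, the inverse Mercer operator of F(x) = 1 − |x| on L²(0,1/2). -/

import Mathlib

lemma aux_const {f : ℝ → ℂ} {b : ℝ} (hb : 0 ≤ b)
    (hc : ContinuousOn f (Set.Icc 0 b))
    (hd : ∀ x ∈ Set.Ioo (0:ℝ) b, HasDerivAt f 0 x) : f b = f 0 := by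
  have := intervalIntegral.integral_eq_sub_of_hasDeriv_right_of_le (f' := fun _ => (0:ℂ)) hb hc
    (fun x hx => (hd x hx).hasDerivWithinAt) intervalIntegrable_const
  simp at this
  exact (eq_of_sub_eq_zero this.symm)

lemma aux_const' {f : ℝ → ℂ} (hc : ContinuousOn f (Set.Icc 0 (1/2)))
    (hd : ∀ x ∈ Set.Ioo (0:ℝ) (1/2), HasDerivAt f 0 x) :
    ∀ t ∈ Set.Icc (0:ℝ) (1/2), f t = f 0 := fun t ht =>
  aux_const ht.1 (hc.mono (Set.Icc_subset_Icc_right ht.2))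
    (fun x hx => hd x ⟨hx.1, lt_of_lt_of_le hx.2 ht.2⟩)

theorem stmt_9 (k : ℝ) (h h' h'' : ℝ → ℂ)
    (hd1 : ∀ x ∈ Set.Icc (0:ℝ) (1/2), HasDerivAt h (h' x) x)
    (hd2 : ∀ x ∈ Set.Icc (0:ℝ) (1/2), HasDerivAt h' (h'' x) x)
    (hcont : ContinuousOn h'' (Set.Icc (0:ℝ) (1/2)))
    (hne : ∃ x ∈ Set.Icc (0:ℝ) (1/2), h x ≠ 0)
    (hode : ∀ x ∈ Set.Ioo (0:ℝ) (1/2), h'' x = -(k : ℂ) ^ 2 * h x)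
    (hb1 : h' 0 + h' (1/2) = 0)
    (hb2 : h 0 + h (1/2) = (3/2 : ℂ) * h' 0) :
    3 * k * Real.sin (k / 2) = 4 * (1 + Real.cos (k / 2)) := by
  have hch : ContinuousOn h (Set.Icc (0:ℝ) (1/2)) :=
    fun x hx => (hd1 x hx).continuousAt.continuousWithinAt
  have hch' : ContinuousOn h' (Set.Icc (0:ℝ) (1/2)) :=
    fun x hx => (hd2 x hx).continuousAt.continuousWithinAt
  have hhalf : (1/2 : ℝ) ∈ Set.Icc (0:ℝ) (1/2) := by norm_num
  -- case k = 0 : contradiction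
  rcases eq_or_ne k 0 with hk | hk
  · exfalso
    have hode0 : ∀ x ∈ Set.Ioo (0:ℝ) (1/2), h'' x = 0 := by
      intro x hx; rw [hode x hx, hk]; simp
    have hconst' : ∀ t ∈ Set.Icc (0:ℝ) (1/2), h' t = h' 0 :=
      aux_const' hch' (fun x hx => by
        have := hd2 x (Set.Ioo_subset_Icc_self hx); rwa [hode0 x hx] at this)
    have hB0 : h' 0 = 0 := by
      have := hconst' (1/2) hhalf
      rw [this] at hb1
      simpa [two_mul] using hb1
    have hconst : ∀ t ∈ Set.Icc (0:ℝ) (1/2), h t = h 0 :=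
      aux_const' hch (fun x hx => by
        have := hd1 x (Set.Ioo_subset_Icc_self hx)
        rwa [hconst' x (Set.Ioo_subset_Icc_self hx), hB0] at this)
    have hA0 : h 0 = 0 := by
      have := hconst (1/2) hhalf
      rw [this] at hb2
      rw [hB0] at hb2
      simpa [two_mul] using hb2
    obtain ⟨x, hx, hxne⟩ := hne
    exact hxne (by rw [hconst x hx, hA0])
  -- main case
  -- the two conserved quantities
  have hctrig : ∀ g : ℝ → ℝ, Continuous g → Continuous (fun x : ℝ => ((g (k*x) : ℝ) : ℂ)) := by
    intro g hg
    exact Complex.continuous_ofReal.comp (hg.comp (continuous_const.mul continuous_id))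
  have hVt : ∀ t ∈ Set.Icc (0:ℝ) (1/2),
      h' t * ((Real.cos (k*t) : ℝ) : ℂ) + (k:ℂ) * (h t * ((Real.sin (k*t) : ℝ) : ℂ))
        = h' 0 * ((Real.cos (k*0) : ℝ) : ℂ) + (k:ℂ) * (h 0 * ((Real.sin (k*0) : ℝ) : ℂ)) := by
    apply aux_const'
    · exact (hch'.mul ((hctrig _ Real.continuous_cos).continuousOn)).add
        (continuousOn_const.mul (hch.mul ((hctrig _ Real.continuous_sin).continuousOn)))
    · intro x hx
      have hx' := Set.Ioo_subset_Icc_self hx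
      have hC := ((Real.hasDerivAt_cos (k*x)).comp x ((hasDerivAt_id x).const_mul k)).ofReal_comp
      have hS := ((Real.hasDerivAt_sin (k*x)).comp x ((hasDerivAt_id x).const_mul k)).ofReal_comp
      have hd := (((hd2 x hx').mul hC).add (((hd1 x hx').mul hS).const_mul (k:ℂ)))
      refine hd.congr_deriv ?_
      rw [hode x hx]
      simp only [Function.comp]
      push_cast
      ring
  have hWt : ∀ t ∈ Set.Icc (0:ℝ) (1/2),
      h' t * ((Real.sin (k*t) : ℝ) : ℂ) - (k:ℂ) * (h t * ((Real.cos (k*t) : ℝ) : ℂ))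
        = h' 0 * ((Real.sin (k*0) : ℝ) : ℂ) - (k:ℂ) * (h 0 * ((Real.cos (k*0) : ℝ) : ℂ)) := by
    apply aux_const'
    · exact (hch'.mul ((hctrig _ Real.continuous_sin).continuousOn)).sub
        (continuousOn_const.mul (hch.mul ((hctrig _ Real.continuous_cos).continuousOn)))
    · intro x hx
      have hx' := Set.Ioo_subset_Icc_self hx
      have hC := ((Real.hasDerivAt_cos (k*x)).comp x ((hasDerivAt_id x).const_mul k)).ofReal_comp
      have hS := ((Real.hasDerivAt_sin (k*x)).comp x ((hasDerivAt_id x).const_mul k)).ofReal_comp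
      have hd := (((hd2 x hx').mul hS).sub (((hd1 x hx').mul hC).const_mul (k:ℂ)))
      refine hd.congr_deriv ?_
      rw [hode x hx]
      simp only [Function.comp]
      push_cast
      ring
  -- simplify the values at 0
  have hVt' : ∀ t ∈ Set.Icc (0:ℝ) (1/2),
      h' t * ((Real.cos (k*t) : ℝ) : ℂ) + (k:ℂ) * (h t * ((Real.sin (k*t) : ℝ) : ℂ)) = h' 0 := by
    intro t ht
    have := hVt t ht
    simpa using this
  have hWt' : ∀ t ∈ Set.Icc (0:ℝ) (1/2),
      h' t * ((Real.sin (k*t) : ℝ) : ℂ) - (k:ℂ) * (h t * ((Real.cos (k*t) : ℝ) : ℂ))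
        = -((k:ℂ) * h 0) := by
    intro t ht
    have := hWt t ht
    simpa [mul_assoc] using this
  -- nondegeneracy
  have hAB : h 0 ≠ 0 ∨ h' 0 ≠ 0 := by
    by_contra hcon
    push_neg at hcon
    obtain ⟨hA, hB⟩ := hcon
    obtain ⟨x, hx, hxne⟩ := hne
    have e1 := hVt' x hx
    have e2 := hWt' x hx
    rw [hB] at e1
    rw [hA] at e2
    have hcs : ((Real.sin (k*x) : ℝ) : ℂ)^2 + ((Real.cos (k*x) : ℝ) : ℂ)^2 = 1 := by
      norm_cast
      exact Real.sin_sq_add_cos_sq (k*x)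
    have hkx : (k:ℂ) * h x = 0 := by
      linear_combination ((Real.sin (k*x) : ℝ) : ℂ) * e1 - ((Real.cos (k*x) : ℝ) : ℂ) * e2
        - (k:ℂ) * h x * hcs
    exact hxne ((mul_eq_zero.mp hkx).resolve_left (by exact_mod_cast hk))
  -- the two equations at 1/2
  have e1 := hVt' (1/2) hhalf
  have e2 := hWt' (1/2) hhalf
  have hk2 : k * (1/2) = k/2 := by ring
  rw [hk2] at e1 e2
  have hB' : h' (1/2) = -(h' 0) := by linear_combination hb1
  have hA' : h (1/2) = (3/2 : ℂ) * h' 0 - h 0 := by linear_combination hb2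
  rw [hB', hA'] at e1 e2
  set c := Real.cos (k/2) with hc
  set s := Real.sin (k/2) with hs
  have hcs : ((s : ℝ) : ℂ)^2 + ((c : ℝ) : ℂ)^2 = 1 := by
    norm_cast
    exact Real.sin_sq_add_cos_sq (k/2)
  have hE0 : ((k : ℂ) * ((3*k*s - 4*(1+c) : ℝ) : ℂ)) * h 0 = 0 := by
    push_cast
    linear_combination (-2 * (-(s:ℂ) - (3/2)*(k:ℂ)*(c:ℂ))) * e1
      + (2 * ((3/2)*(k:ℂ)*(s:ℂ) - (c:ℂ) - 1)) * e2 + 2*(k:ℂ)*(h 0)*hcs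
  have hE1 : ((k : ℂ) * ((3*k*s - 4*(1+c) : ℝ) : ℂ)) * h' 0 = 0 := by
    push_cast
    linear_combination (-2 * (-(k:ℂ)*(1+(c:ℂ)))) * e1
      + (2 * ((k:ℂ)*(s:ℂ))) * e2 + 2*(k:ℂ)*(h' 0)*hcs
  have hkE : ((k : ℂ) * ((3*k*s - 4*(1+c) : ℝ) : ℂ)) = 0 := by
    rcases hAB with hA | hB
    · exact (mul_eq_zero.mp hE0).resolve_right hA
    · exact (mul_eq_zero.mp hE1).resolve_right hB
  have hE : (3*k*s - 4*(1+c) : ℝ) = 0 := by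
    rcases mul_eq_zero.mp hkE with h0 | h0
    · exact absurd (by exact_mod_cast h0) hk
    · exact_mod_cast h0
  linarith
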